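/- Fix block sizes a_1,…,a_s and a'_1,…,a'_t in {1,…,n} with a_1+…+a_s = a'_1+…+a'_t = r, and polynomials P_{i,j} ∈ ℂ[x]. For N in the nilpotent cone of n×n matrices, let N^P be the r×r block matrix whose (i,j) block is the submatrix of P_{i,j}(N) consisting of its last a_i rows and first a'_j columns. Then the function f(N) = det(N^P) is a B-semi-invariant: for all b ∈ B and nilpotent N, f(bNb⁻¹) = χ(b)·f(N), where χ(b) = Π_{i=1}^s (b_{n−a_i+1,n−a_i+1}⋯b_{n,n}) · Π_{j=1}^t (b_{1,1}⋯b_{a'_j,a'_j})^{−1}. -/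

import Mathlib

open Matrix

section Helpers
open Finset

section SumAux
variable {M : Type*} [AddCommMonoid M]

lemma sum_first_aux {n m : ℕ} (hm : m ≤ n) (f : Fin n → M)
    (hf : ∀ k : Fin n, m ≤ (k : ℕ) → f k = 0) :
    ∑ k, f k = ∑ c : Fin m, f ⟨c.val, lt_of_lt_of_le c.isLt hm⟩ := by
  set g : ℕ → M := fun i => if h : i < n then f ⟨i, h⟩ else 0 with hg
  have h1 : ∑ k, f k = ∑ i ∈ Finset.range n, g i := by
    rw [← Fin.sum_univ_eq_sum_range g n]
    exact Finset.sum_congr rfl fun k _ => by simp [hg, k.isLt]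
  have h2 : ∑ i ∈ Finset.range m, g i = ∑ i ∈ Finset.range n, g i := by
    apply Finset.sum_subset (Finset.range_subset_range.2 hm)
    intro x hx hnx
    simp only [Finset.mem_range, not_lt] at hx hnx
    simp only [hg]
    rw [dif_pos hx]
    exact hf _ hnx
  rw [h1, ← h2, ← Fin.sum_univ_eq_sum_range g m]
  exact Finset.sum_congr rfl fun c _ => by simp [hg, lt_of_lt_of_le c.isLt hm]

lemma sum_last_aux {n m : ℕ} (hm : m ≤ n) (f : Fin n → M)
    (hf : ∀ k : Fin n, (k : ℕ) < n - m → f k = 0) :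
    ∑ k, f k = ∑ rr : Fin m, f ⟨n - m + rr.val, by have := rr.isLt; omega⟩ := by
  set g : ℕ → M := fun i => if h : i < n then f ⟨i, h⟩ else 0 with hg
  have h1 : ∑ k, f k = ∑ i ∈ Finset.range n, g i := by
    rw [← Fin.sum_univ_eq_sum_range g n]
    exact Finset.sum_congr rfl fun k _ => by simp [hg, k.isLt]
  have h2 : ∑ i ∈ Finset.Ico (n - m) n, g i = ∑ i ∈ Finset.range n, g i := by
    apply Finset.sum_subset
    · intro x hx
      rw [Finset.mem_Ico] at hx
      exact Finset.mem_range.2 hx.2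
    · intro x hx hnx
      rw [Finset.mem_range] at hx
      rw [Finset.mem_Ico, not_and_or, not_le, not_lt] at hnx
      have hxlt : x < n - m := by omega
      simp only [hg]
      rw [dif_pos hx]
      exact hf _ hxlt
  rw [h1, ← h2, Finset.sum_Ico_eq_sum_range]
  have hnm : n - (n - m) = m := by omega
  rw [show (∑ i ∈ Finset.range (n - (n - m)), g (n - m + i)) = ∑ i ∈ Finset.range m, g (n - m + i) by rw [hnm]]
  rw [← Fin.sum_univ_eq_sum_range (fun i => g (n - m + i)) m]
  refine Finset.sum_congr rfl fun rr _ => ?_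
  have h : n - m + (rr : ℕ) < n := by have := rr.isLt; omega
  simp [hg, h]

end SumAux

lemma aeval_conj {n : ℕ} {b : Matrix (Fin n) (Fin n) ℂ} (hb : IsUnit b)
    (N : Matrix (Fin n) (Fin n) ℂ) (p : Polynomial ℂ) :
    Polynomial.aeval (b * N * b⁻¹) p = b * Polynomial.aeval N p * b⁻¹ := by
  have hdet : IsUnit b.det := (Matrix.isUnit_iff_isUnit_det b).mp hb
  letI : Invertible b := b.invertibleOfIsUnitDet hdet
  have hbb : b * b⁻¹ = 1 := Matrix.mul_nonsing_inv b hdet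
  induction p using Polynomial.induction_on' with
  | add p q hp hq => simp [hp, hq, Matrix.mul_add, Matrix.add_mul]
  | monomial k c =>
      have hpow : ∀ k : ℕ, (b * N * b⁻¹) ^ k = b * N ^ k * b⁻¹ := by
        intro k
        induction k with
        | zero => simp [hbb]
        | succ k ih =>
            rw [pow_succ, ih, pow_succ]
            simp [Matrix.mul_assoc, Matrix.inv_mul_cancel_left_of_invertible]
      rw [Polynomial.aeval_monomial, Polynomial.aeval_monomial, hpow,
        ← Algebra.smul_def, ← Algebra.smul_def]
      simp [Matrix.mul_smul, Matrix.smul_mul]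

lemma det_blockDiagonal'_fin {l : ℕ} (m : Fin l → ℕ)
    (d : ∀ i, Matrix (Fin (m i)) (Fin (m i)) ℂ) :
    (Matrix.blockDiagonal' d).det = ∏ i, (d i).det := by
  rw [Matrix.BlockTriangular.det_fintype (Matrix.blockTriangular_blockDiagonal' d)]
  refine Finset.prod_congr rfl fun i _ => ?_
  let eqv : Fin (m i) ≃ {x : (i : Fin l) × Fin (m i) // x.1 = i} :=
    { toFun := fun rr => ⟨⟨i, rr⟩, rfl⟩
      invFun := fun x => Fin.cast (congrArg m x.2) x.1.2
      left_inv := fun rr => rfl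
      right_inv := fun x => by
        obtain ⟨⟨i', rr⟩, h⟩ := x
        subst h
        rfl }
  rw [← Matrix.det_submatrix_equiv_self eqv]
  congr 1
  ext rr rr'
  exact Matrix.blockDiagonal'_apply_eq d i rr rr'

lemma blockDiagonal'_mul_apply {l : ℕ} {m : Fin l → ℕ}
    (d : ∀ i, Matrix (Fin (m i)) (Fin (m i)) ℂ) {γ : Type*}
    (Z : Matrix ((i : Fin l) × Fin (m i)) γ ℂ) (i : Fin l) (rr : Fin (m i)) (c : γ) :
    (Matrix.blockDiagonal' d * Z) ⟨i, rr⟩ c = ∑ rr', d i rr rr' * Z ⟨i, rr'⟩ c := by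
  rw [Matrix.mul_apply, ← Finset.univ_sigma_univ, Finset.sum_sigma]
  rw [Finset.sum_eq_single i (fun i' _ hne => Finset.sum_eq_zero fun rr' _ => by
    rw [Matrix.blockDiagonal'_apply_ne d rr rr' (Ne.symm hne), zero_mul])
    (fun h => absurd (Finset.mem_univ i) h)]
  exact Finset.sum_congr rfl fun rr' _ => by rw [Matrix.blockDiagonal'_apply_eq]

lemma mul_blockDiagonal'_apply {l : ℕ} {m : Fin l → ℕ}
    (d : ∀ j, Matrix (Fin (m j)) (Fin (m j)) ℂ) {γ : Type*}
    (Z : Matrix γ ((j : Fin l) × Fin (m j)) ℂ) (x : γ) (j : Fin l) (c : Fin (m j)) :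
    (Z * Matrix.blockDiagonal' d) x ⟨j, c⟩ = ∑ c', Z x ⟨j, c'⟩ * d j c' c := by
  rw [Matrix.mul_apply, ← Finset.univ_sigma_univ, Finset.sum_sigma]
  rw [Finset.sum_eq_single j (fun j' _ hne => Finset.sum_eq_zero fun c' _ => by
    rw [Matrix.blockDiagonal'_apply_ne d c' c hne, mul_zero])
    (fun h => absurd (Finset.mem_univ j) h)]
  exact Finset.sum_congr rfl fun c' _ => by rw [Matrix.blockDiagonal'_apply_eq]

lemma mul_submatrix_blockDiagonal'_apply {l : ℕ} {m : Fin l → ℕ}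
    (d : ∀ j, Matrix (Fin (m j)) (Fin (m j)) ℂ) {γ κ : Type*} [Fintype κ]
    (σ : κ ≃ ((j : Fin l) × Fin (m j)))
    (Z : Matrix γ κ ℂ) (x : γ) (cc : κ) :
    (Z * (Matrix.blockDiagonal' d).submatrix ⇑σ ⇑σ) x cc
      = ∑ c' : Fin (m (σ cc).1), Z x (σ.symm ⟨(σ cc).1, c'⟩) * d (σ cc).1 c' (σ cc).2 := by
  rw [Matrix.mul_apply,
    ← Equiv.sum_comp σ.symm (fun y => Z x y * (Matrix.blockDiagonal' d).submatrix ⇑σ ⇑σ y cc)]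
  simp only [Matrix.submatrix_apply, Equiv.apply_symm_apply]
  have hgen : ∀ (jc : (j : Fin l) × Fin (m j)),
      (∑ y, Z x (σ.symm y) * Matrix.blockDiagonal' d y jc)
        = ∑ c' : Fin (m jc.1), Z x (σ.symm ⟨jc.1, c'⟩) * d jc.1 c' jc.2 := by
    rintro ⟨j, c⟩
    exact mul_blockDiagonal'_apply d (Matrix.of fun x y => Z x (σ.symm y)) x j c
  exact hgen (σ cc)

end Helpers

/-- The determinant of the `r × r` block matrix `N^P` whose `(i,j)` block is
the submatrix of `P i j` evaluated at `N` consisting of its last `a i` rows and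
first `a' j` columns; the column index type is transported to the row index
type via a fixed equivalence `e` (which exists since `∑ a i = r = ∑ a' j`). -/
noncomputable def blockDet (n s t : ℕ) (a : Fin s → ℕ) (a' : Fin t → ℕ)
    (ha : ∀ i, a i ≤ n) (ha' : ∀ j, a' j ≤ n)
    (P : Fin s → Fin t → Polynomial ℂ)
    (e : ((j : Fin t) × Fin (a' j)) ≃ ((i : Fin s) × Fin (a i)))
    (N : Matrix (Fin n) (Fin n) ℂ) : ℂ :=
  Matrix.det (Matrix.of fun (rc cc : (i : Fin s) × Fin (a i)) =>
    (Polynomial.aeval N (P rc.1 (e.symm cc).1))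
      ⟨n - a rc.1 + rc.2.val, by have := rc.2.isLt; have := ha rc.1; omega⟩
      ⟨(e.symm cc).2.val, by
        have := ((e.symm cc).2).isLt; have := ha' (e.symm cc).1; omega⟩)

/-- The weight `χ(b) = ∏_i (b_{n−a_i+1,n−a_i+1}⋯b_{n,n}) ·
∏_j (b_{1,1}⋯b_{a'_j,a'_j})⁻¹`. -/
noncomputable def weightChi (n s t : ℕ) (a : Fin s → ℕ) (a' : Fin t → ℕ)
    (ha : ∀ i, a i ≤ n) (ha' : ∀ j, a' j ≤ n)
    (b : Matrix (Fin n) (Fin n) ℂ) : ℂ :=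
  (∏ i : Fin s, ∏ rr : Fin (a i),
      b ⟨n - a i + rr.val, by have := rr.isLt; have := ha i; omega⟩
        ⟨n - a i + rr.val, by have := rr.isLt; have := ha i; omega⟩) *
    (∏ j : Fin t, ∏ c : Fin (a' j),
      b ⟨c.val, by have := c.isLt; have := ha' j; omega⟩
        ⟨c.val, by have := c.isLt; have := ha' j; omega⟩)⁻¹

/-- The function `N ↦ det(N^P)` on the nilpotent cone is a `B`-semi-invariant
of weight `χ`: `f(bNb⁻¹) = χ(b)·f(N)` for every upper triangular invertible `b`. -/
theorem blockDet_semi_invariant (n s t r : ℕ)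
    (a : Fin s → ℕ) (a' : Fin t → ℕ)
    (ha1 : ∀ i, 1 ≤ a i) (ha : ∀ i, a i ≤ n)
    (ha'1 : ∀ j, 1 ≤ a' j) (ha' : ∀ j, a' j ≤ n)
    (hsum : ∑ i, a i = r) (hsum' : ∑ j, a' j = r)
    (P : Fin s → Fin t → Polynomial ℂ)
    (e : ((j : Fin t) × Fin (a' j)) ≃ ((i : Fin s) × Fin (a i)))
    (N : Matrix (Fin n) (Fin n) ℂ) (hN : N ^ n = 0)
    (b : Matrix (Fin n) (Fin n) ℂ) (hb : IsUnit b)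
    (hupper : ∀ i j : Fin n, (j : ℕ) < (i : ℕ) → b i j = 0) :
    blockDet n s t a a' ha ha' P e (b * N * b⁻¹) =
      weightChi n s t a a' ha ha' b * blockDet n s t a a' ha ha' P e N := by
  classical
  have hdet : IsUnit b.det := (Matrix.isUnit_iff_isUnit_det b).mp hb
  letI : Invertible b := b.invertibleOfIsUnitDet hdet
  have hinv : ∀ i j : Fin n, (j : ℕ) < (i : ℕ) → b⁻¹ i j = 0 := by
    have hbt : b.BlockTriangular (id : Fin n → Fin n) := fun i j hij => hupper i j hij
    have h2 := Matrix.blockTriangular_inv_of_blockTriangular hbt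
    exact fun i j h => h2 h
  -- block matrices
  set Lb : ∀ i : Fin s, Matrix (Fin (a i)) (Fin (a i)) ℂ := fun i =>
    Matrix.of fun rr rr' => b
      ⟨n - a i + rr.val, by have := rr.isLt; have := ha i; omega⟩
      ⟨n - a i + rr'.val, by have := rr'.isLt; have := ha i; omega⟩ with hLb
  set Rb : ∀ j : Fin t, Matrix (Fin (a' j)) (Fin (a' j)) ℂ := fun j =>
    Matrix.of fun c c' => b⁻¹
      ⟨c.val, lt_of_lt_of_le c.isLt (ha' j)⟩
      ⟨c'.val, lt_of_lt_of_le c'.isLt (ha' j)⟩ with hRb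
  set emb : ((j : Fin t) × Fin (a' j)) → Fin n :=
    fun y => ⟨y.2.val, lt_of_lt_of_le y.2.isLt (ha' y.1)⟩ with hemb
  set MN : Matrix ((i : Fin s) × Fin (a i)) ((i : Fin s) × Fin (a i)) ℂ :=
    Matrix.of fun rc cc => (Polynomial.aeval N (P rc.1 (e.symm cc).1))
      ⟨n - a rc.1 + rc.2.val, by have := rc.2.isLt; have := ha rc.1; omega⟩
      (emb (e.symm cc)) with hMN
  -- the key matrix identity
  have key : (Matrix.of fun rc cc : (i : Fin s) × Fin (a i) =>
      (Polynomial.aeval (b * N * b⁻¹) (P rc.1 (e.symm cc).1))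
        ⟨n - a rc.1 + rc.2.val, by have := rc.2.isLt; have := ha rc.1; omega⟩
        (emb (e.symm cc)))
      = Matrix.blockDiagonal' Lb * MN *
        (Matrix.blockDiagonal' Rb).submatrix ⇑e.symm ⇑e.symm := by
    ext rc cc
    obtain ⟨i, rr⟩ := rc
    rw [Matrix.of_apply, aeval_conj hb, Matrix.mul_assoc (Matrix.blockDiagonal' Lb)]
    rw [blockDiagonal'_mul_apply]
    simp only [mul_submatrix_blockDiagonal'_apply, Equiv.symm_symm, hMN, Matrix.of_apply,
      Equiv.symm_apply_apply, hLb, hRb]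
    have expand : ∀ (p : Polynomial ℂ) (row col : Fin n),
        (col : ℕ) < a' (e.symm cc).1 → n - a i ≤ (row : ℕ) →
        (b * Polynomial.aeval N p * b⁻¹) row col
          = ∑ rr' : Fin (a i), ∑ c' : Fin (a' (e.symm cc).1),
              b row ⟨n - a i + rr'.val, by have := rr'.isLt; have := ha i; omega⟩ *
                ((Polynomial.aeval N p)
                    ⟨n - a i + rr'.val, by have := rr'.isLt; have := ha i; omega⟩
                    (emb ⟨(e.symm cc).1, c'⟩) *
                  b⁻¹ (emb ⟨(e.symm cc).1, c'⟩) col) := by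
      intro p row col hcol hrow
      have hv1 : ∀ k : Fin n, (k : ℕ) < n - a i →
          b row k * (Polynomial.aeval N p * b⁻¹) k col = 0 := by
        intro k hk
        rw [hupper row k (by omega), zero_mul]
      rw [Matrix.mul_assoc, Matrix.mul_apply, sum_last_aux (ha i) _ hv1]
      refine Finset.sum_congr rfl fun rr' _ => ?_
      have hv2 : ∀ l : Fin n, a' (e.symm cc).1 ≤ (l : ℕ) →
          (Polynomial.aeval N p)
              ⟨n - a i + rr'.val, by have := rr'.isLt; have := ha i; omega⟩ l *
            b⁻¹ l col = 0 := by
        intro l hl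
        rw [hinv l col (by omega), mul_zero]
      rw [Matrix.mul_apply, sum_first_aux (ha' (e.symm cc).1) _ hv2, Finset.mul_sum]
    rw [expand (P i (e.symm cc).1) _ _ ((e.symm cc).2).isLt (Nat.le_add_right _ _)]
    simp only [Finset.mul_sum]
    rfl
  -- determinants
  have h0 : blockDet n s t a a' ha ha' P e (b * N * b⁻¹)
      = (Matrix.blockDiagonal' Lb * MN *
          (Matrix.blockDiagonal' Rb).submatrix ⇑e.symm ⇑e.symm).det := by
    rw [← key]; rfl
  have h1 : blockDet n s t a a' ha ha' P e N = MN.det := rfl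
  have hLdet : (Matrix.blockDiagonal' Lb).det
      = ∏ i : Fin s, ∏ rr : Fin (a i), Lb i rr rr := by
    rw [det_blockDiagonal'_fin]
    refine Finset.prod_congr rfl fun i _ => ?_
    refine Matrix.det_of_upperTriangular ?_
    intro rr rr' hlt
    have hv : (rr' : ℕ) < (rr : ℕ) := hlt
    exact hupper _ _ (by simp only []; omega)
  have hRl : ∀ j : Fin t, (Rb j).det
      = (∏ c : Fin (a' j), b ⟨c.val, lt_of_lt_of_le c.isLt (ha' j)⟩
          ⟨c.val, lt_of_lt_of_le c.isLt (ha' j)⟩)⁻¹ := by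
    intro j
    set B : Matrix (Fin (a' j)) (Fin (a' j)) ℂ :=
      Matrix.of fun c c' => b ⟨c.val, lt_of_lt_of_le c.isLt (ha' j)⟩
        ⟨c'.val, lt_of_lt_of_le c'.isLt (ha' j)⟩ with hBdef
    have hmul : Rb j * B = 1 := by
      ext c c''
      have hv : ∀ l : Fin n, a' j ≤ (l : ℕ) →
          b⁻¹ ⟨c.val, lt_of_lt_of_le c.isLt (ha' j)⟩ l *
            b l ⟨c''.val, lt_of_lt_of_le c''.isLt (ha' j)⟩ = 0 := by
        intro l hl
        rw [hupper l ⟨c''.val, lt_of_lt_of_le c''.isLt (ha' j)⟩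
          (lt_of_lt_of_le c''.isLt hl), mul_zero]
      have hfull : (b⁻¹ * b) (⟨c.val, lt_of_lt_of_le c.isLt (ha' j)⟩ : Fin n)
          ⟨c''.val, lt_of_lt_of_le c''.isLt (ha' j)⟩
          = ∑ c' : Fin (a' j), Rb j c c' * B c' c'' := by
        rw [Matrix.mul_apply, sum_first_aux (ha' j) _ hv]
        rfl
      rw [Matrix.mul_apply, ← hfull, Matrix.nonsing_inv_mul b hdet]
      by_cases h : c = c''
      · subst h; simp [Matrix.one_apply]
      · have h' : (⟨c.val, lt_of_lt_of_le c.isLt (ha' j)⟩ : Fin n)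
            ≠ ⟨c''.val, lt_of_lt_of_le c''.isLt (ha' j)⟩ := by
          simp only [ne_eq, Fin.mk.injEq]
          exact fun hc => h (Fin.ext hc)
        rw [Matrix.one_apply_ne h', Matrix.one_apply_ne h]
    have hdetmul : (Rb j).det * B.det = 1 := by
      rw [← Matrix.det_mul, hmul, Matrix.det_one]
    have hBdet : B.det = ∏ c : Fin (a' j), b ⟨c.val, lt_of_lt_of_le c.isLt (ha' j)⟩
        ⟨c.val, lt_of_lt_of_le c.isLt (ha' j)⟩ := by
      refine Matrix.det_of_upperTriangular ?_
      intro c c' hlt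
      have hv' : (c' : ℕ) < (c : ℕ) := hlt
      exact hupper _ _ hv'
    rw [← hBdet]
    exact eq_inv_of_mul_eq_one_left hdetmul
  have hRdet : ((Matrix.blockDiagonal' Rb).submatrix ⇑e.symm ⇑e.symm).det
      = (∏ j : Fin t, ∏ c : Fin (a' j), b ⟨c.val, lt_of_lt_of_le c.isLt (ha' j)⟩
          ⟨c.val, lt_of_lt_of_le c.isLt (ha' j)⟩)⁻¹ := by
    rw [Matrix.det_submatrix_equiv_self e.symm, det_blockDiagonal'_fin,
      ← Finset.prod_inv_distrib]
    exact Finset.prod_congr rfl fun j _ => hRl j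
  rw [h0, h1, Matrix.det_mul, Matrix.det_mul, hLdet, hRdet]
  exact mul_right_comm _ _ _
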